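/- arXiv:2204.13907 — 3 statements merged into one kernel-verified Lean document; each statement's English description precedes it below -/
import Mathlib

section
/- Let $b \ge 2$ be an integer, $B \subseteq \mathbb{Z}_{\ge 0}$ a finite set with $\#B = b$, and let $c = \#(B \setminus \{0,1,\dots,b-1\})$. Then for all $\xi \in \mathbb{R}$, $\left|\frac{1}{b}\sum_{x\in B} e^{-2\pi i x\xi}\right| \ge 1 - \frac{(b\pi\xi)^2}{6} - \frac{2c}{b}$. -/
open Complex

private lemma sum_id_real (n : ℕ) : ∑ j ∈ Finset.range n, (j : ℝ) = n * (n - 1) / 2 := by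
  induction n with
  | zero => simp
  | succ n ih => rw [Finset.sum_range_succ, ih]; push_cast; ring

private lemma sum_sq_real (n : ℕ) :
    ∑ j ∈ Finset.range n, (j : ℝ) ^ 2 = n * (n - 1) * (2 * n - 1) / 6 := by
  induction n with
  | zero => simp
  | succ n ih => rw [Finset.sum_range_succ, ih]; push_cast; ring

private lemma sum_center (n : ℕ) :
    ∑ j ∈ Finset.range n, ((j : ℝ) - (n - 1) / 2) ^ 2 = n * ((n:ℝ) ^ 2 - 1) / 12 := by
  have h : ∀ j ∈ Finset.range n,
      ((j : ℝ) - (n - 1) / 2) ^ 2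
        = (j : ℝ) ^ 2 - ((n:ℝ) - 1) * (j : ℝ) + (((n:ℝ) - 1) / 2) ^ 2 := by
    intro j _; ring
  rw [Finset.sum_congr rfl h]
  simp only [Finset.sum_add_distrib, Finset.sum_sub_distrib, ← Finset.mul_sum,
    Finset.sum_const, Finset.card_range, nsmul_eq_mul, sum_id_real, sum_sq_real]
  ring

theorem mask_fourier_lower_bound
    (b : ℕ) (hb : 2 ≤ b) (B : Finset ℕ) (hcard : B.card = b)
    (c : ℕ) (hc : c = (B \ Finset.range b).card) (ξ : ℝ) :
    ‖(b : ℂ)⁻¹ * ∑ x ∈ B, Complex.exp (-2 * Real.pi * Complex.I * (x : ℂ) * (ξ : ℂ))‖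
      ≥ 1 - (b * Real.pi * ξ) ^ 2 / 6 - 2 * c / b := by
  set f : ℕ → ℂ := fun x => Complex.exp (-2 * Real.pi * Complex.I * (x : ℂ) * (ξ : ℂ)) with hf
  have hnorm : ∀ x : ℕ, ‖f x‖ = 1 := by
    intro x
    have : (-2 * (Real.pi:ℂ) * Complex.I * (x : ℂ) * (ξ : ℂ))
        = ((-2 * Real.pi * x * ξ : ℝ) : ℂ) * Complex.I := by push_cast; ring
    rw [hf]; simp only [this]
    rw [Complex.norm_exp]
    simp
  set S := ∑ x ∈ B, f x with hS
  set T := ∑ j ∈ Finset.range b, f j with hT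
  have hbR : (0:ℝ) < b := by positivity
  -- symmetric difference bound
  have hcard2 : (Finset.range b \ B).card = c := by
    rw [hc, Finset.card_sdiff_comm]
    rw [hcard, Finset.card_range]
  have hdiff : ‖S - T‖ ≤ 2 * c := by
    have hST : S - T = (∑ x ∈ B \ Finset.range b, f x) - ∑ x ∈ Finset.range b \ B, f x := by
      have h1 := Finset.sum_inter_add_sum_sdiff B (Finset.range b) f
      have h2 := Finset.sum_inter_add_sum_sdiff (Finset.range b) B f
      rw [hS, hT, ← h1, ← h2, Finset.inter_comm]
      ring
    rw [hST]
    calc ‖(∑ x ∈ B \ Finset.range b, f x) - ∑ x ∈ Finset.range b \ B, f x‖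
        ≤ ‖∑ x ∈ B \ Finset.range b, f x‖ + ‖∑ x ∈ Finset.range b \ B, f x‖ :=
          norm_sub_le _ _
      _ ≤ (c : ℝ) + c := by
          gcongr
          · calc ‖∑ x ∈ B \ Finset.range b, f x‖ ≤ ∑ x ∈ B \ Finset.range b, ‖f x‖ :=
                norm_sum_le _ _
              _ = c := by simp [hnorm, hc]
          · calc ‖∑ x ∈ Finset.range b \ B, f x‖ ≤ ∑ x ∈ Finset.range b \ B, ‖f x‖ :=
                norm_sum_le _ _
              _ = c := by simp [hnorm, hcard2]
      _ = 2 * c := by ring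
  -- lower bound for ‖T‖
  set m : ℝ := ((b:ℝ) - 1) / 2 with hm
  set w : ℂ := Complex.exp (((2 * Real.pi * m * ξ : ℝ) : ℂ) * Complex.I) with hw
  have hwnorm : ‖w‖ = 1 := by rw [hw, Complex.norm_exp]; simp
  have hwT : ∀ j : ℕ, w * f j
      = Complex.exp (((-2 * Real.pi * ((j:ℝ) - m) * ξ : ℝ) : ℂ) * Complex.I) := by
    intro j
    rw [hw, hf, ← Complex.exp_add]
    congr 1
    push_cast
    ring
  have hTlow : (b:ℝ) - (b:ℝ) * ((b:ℝ) * Real.pi * ξ) ^ 2 / 6 ≤ ‖T‖ := by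
    have h1 : (w * T).re ≤ ‖T‖ := by
      calc (w * T).re ≤ ‖w * T‖ := Complex.re_le_norm _
        _ = ‖T‖ := by rw [norm_mul, hwnorm, one_mul]
    refine le_trans ?_ h1
    rw [hT, Finset.mul_sum]
    rw [Complex.re_sum]
    have h2 : ∀ j ∈ Finset.range b, (w * f j).re = Real.cos (-2 * Real.pi * ((j:ℝ) - m) * ξ) := by
      intro j _
      rw [hwT j, Complex.exp_ofReal_mul_I_re]
    rw [Finset.sum_congr rfl h2]
    have h3 : ∀ j ∈ Finset.range b,
        1 - (2 * Real.pi * ξ) ^ 2 / 2 * ((j:ℝ) - m) ^ 2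
          ≤ Real.cos (-2 * Real.pi * ((j:ℝ) - m) * ξ) := by
      intro j _
      have := Real.one_sub_sq_div_two_le_cos (x := -2 * Real.pi * ((j:ℝ) - m) * ξ)
      nlinarith [this]
    calc (b:ℝ) - (b:ℝ) * ((b:ℝ) * Real.pi * ξ) ^ 2 / 6
        ≤ ∑ j ∈ Finset.range b, (1 - (2 * Real.pi * ξ) ^ 2 / 2 * ((j:ℝ) - m) ^ 2) := by
          rw [Finset.sum_sub_distrib, Finset.sum_const, Finset.card_range, ← Finset.mul_sum,
            hm, sum_center]
          have hb1 : (1:ℝ) ≤ (b:ℝ) := by exact_mod_cast Nat.one_le_of_lt hb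
          have hpi : (0:ℝ) ≤ (Real.pi * ξ) ^ 2 := sq_nonneg _
          simp only [nsmul_eq_mul, mul_one]
          nlinarith [sq_nonneg ((b:ℝ) * Real.pi * ξ), mul_nonneg (mul_nonneg hbR.le hbR.le) hpi]
      _ ≤ _ := Finset.sum_le_sum h3
  -- combine
  have hSlow : (b:ℝ) - (b:ℝ) * ((b:ℝ) * Real.pi * ξ) ^ 2 / 6 - 2 * c ≤ ‖S‖ := by
    have := norm_sub_norm_le T S
    have h4 : ‖T - S‖ ≤ 2 * c := by rw [norm_sub_rev]; exact hdiff
    linarith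
  rw [ge_iff_le, norm_mul, norm_inv]
  have hbn : ‖(b:ℂ)‖ = (b:ℝ) := by simp
  rw [hbn]
  rw [inv_mul_eq_div, le_div_iff₀ hbR]
  have heq : (1 - ((b:ℝ) * Real.pi * ξ) ^ 2 / 6 - 2 * c / b) * b
      = (b:ℝ) - (b:ℝ) * ((b:ℝ) * Real.pi * ξ) ^ 2 / 6 - 2 * c := by
    field_simp
  rw [heq]
  exact hSlow
end

section
/- Let $\{b_k\}$, $\{N_k\}$ be positive integers with $N_k \ge b_k \ge 2$ and $b_k \mid N_k$ for all $k$, and suppose $\sum_{k=1}^\infty \frac{b_k - 1}{N_1 N_2 \cdots N_k} < \infty$ and $\sum_{k=1}^\infty \frac{c_k}{b_k} < \infty$, where $B_k \subseteq \mathbb{Z}_{\ge 0}$ satisfies $B_k \equiv \{0,\dots,b_k-1\} \pmod{N_k}$ and $c_k = \#(B_k \setminus \{0,\dots,b_k-1\})$. Then with $A_k = (N_1\cdots N_k)^{-1}B_k$, the condition $\sum_{k=1}^\infty \frac{1}{\#A_k}\sum_{a\in A_k}\frac{a}{1+a} < \infty$ holds, hence the infinite convolution $\delta_{A_1}*\delta_{A_2}*\cdots$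 exists. -/
set_option maxHeartbeats 1000000

open MeasureTheory Filter Finset
open scoped ENNReal

/-- The uniform discrete probability measure on a finite subset of `ℝ`. -/
noncomputable def uniformDisc (A : Finset ℝ) : Measure ℝ :=
  ((A.card : ENNReal))⁻¹ • ∑ a ∈ A, Measure.dirac a

/-- `convSeq A n` is the convolution `δ_{A 0} ∗ δ_{A 1} ∗ ⋯ ∗ δ_{A n}`. -/
noncomputable def convSeq (A : ℕ → Finset ℝ) : ℕ → Measure ℝ
  | 0 => uniformDisc (A 0)
  | n + 1 => Measure.conv (convSeq A n) (uniformDisc (A (n + 1)))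

/-- `ν n` converges weakly to `μ`. -/
def WeakLimit (ν : ℕ → Measure ℝ) (μ : Measure ℝ) : Prop :=
  ∀ f : BoundedContinuousFunction ℝ ℝ,
    Tendsto (fun n => ∫ x, f x ∂(ν n)) atTop (nhds (∫ x, f x ∂μ))

lemma sum_range_add_eq {β : Type*} [AddCommMonoid β] (F : ℕ → β) (a b : ℕ) :
    ∑ j ∈ Finset.range (a + b), F j
      = ∑ j ∈ Finset.range a, F j + ∑ j ∈ Finset.range b, F (a + j) := by
  have := Finset.sum_Ico_consecutive F (Nat.zero_le a) (Nat.le_add_right a b)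
  rw [← Finset.range_eq_Ico] at *
  rw [← Finset.range_eq_Ico] at this
  rw [← this, Finset.sum_Ico_eq_sum_range]
  simp

lemma sum_range_mul_eq {β : Type*} [AddCommMonoid β] (F : ℕ → β) (M m : ℕ) :
    ∑ j ∈ Finset.range (M * m), F j
      = ∑ q ∈ Finset.range M, ∑ r ∈ Finset.range m, F (q * m + r) := by
  induction M with
  | zero => simp
  | succ M ih =>
      have h1 : (M + 1) * m = M * m + m := by ring
      rw [h1, sum_range_add_eq, ih, Finset.sum_range_succ]

noncomputable def efun (A : ℕ → Finset ℝ) (k : ℕ) (r : ℕ) : ℝ :=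
  if h : r < (A k).card then ((A k).orderIsoOfFin rfl ⟨r, h⟩ : ℝ) else 0

lemma sum_efun {β : Type*} [AddCommMonoid β] (A : ℕ → Finset ℝ) (k : ℕ) (F : ℝ → β) :
    ∑ r ∈ Finset.range (A k).card, F (efun A k r) = ∑ a ∈ A k, F a := by
  rw [Finset.sum_range (fun r => F (efun A k r)), ← Finset.sum_coe_sort (A k) F]
  rw [← Equiv.sum_comp ((A k).orderIsoOfFin rfl).toEquiv (fun a => F a)]
  apply Finset.sum_congr rfl
  intro i _
  simp [efun, i.2]

noncomputable def Hfun (A : ℕ → Finset ℝ) : ℕ → ℕ → ℝ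
  | 0 => fun j => efun A 0 (j % (A 0).card)
  | n+1 => fun j => Hfun A n (j / (A (n+1)).card) + efun A (n+1) (j % (A (n+1)).card)

variable {α : Type*} [MeasurableSpace α]

lemma prod_smul_left (c : ℝ≥0∞) (μ ν : Measure ℝ) [SFinite μ] [SFinite ν] :
    (c • μ).prod ν = c • (μ.prod ν) := by
  ext s hs
  rw [Measure.prod_apply hs, Measure.smul_apply, Measure.prod_apply hs,
    MeasureTheory.lintegral_smul_measure]

lemma prod_smul_right (c : ℝ≥0∞) (μ ν : Measure ℝ) [SFinite μ] [SFinite ν] :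
    μ.prod (c • ν) = c • (μ.prod ν) := by
  ext s hs
  rw [Measure.prod_apply hs, Measure.smul_apply, Measure.prod_apply hs]
  simp only [Measure.smul_apply, smul_eq_mul]
  rw [MeasureTheory.lintegral_const_mul _ (measurable_measure_prodMk_left hs)]

lemma map_finsetSum' {ι β γ : Type*} [MeasurableSpace β] [MeasurableSpace γ]
    (s : Finset ι) (μ : ι → Measure β) {f : β → γ} (hf : Measurable f) :
    (∑ i ∈ s, μ i).map f = ∑ i ∈ s, (μ i).map f := by
  classical
  induction s using Finset.induction_on with
  | empty => simp
  | insert a s h ih => rw [Finset.sum_insert h, Finset.sum_insert h, Measure.map_add _ _ hf, ih]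

lemma prod_finsetSum_left {ι : Type*} (s : Finset ι) (μ : ι → Measure ℝ) (ν : Measure ℝ)
    [∀ i, IsFiniteMeasure (μ i)] [SFinite ν] :
    (∑ i ∈ s, μ i).prod ν = ∑ i ∈ s, (μ i).prod ν := by
  classical
  induction s using Finset.induction_on with
  | empty => simp [Measure.zero_prod]
  | insert a s h ih => rw [Finset.sum_insert h, Finset.sum_insert h, Measure.add_prod, ih]

lemma prod_finsetSum_right {ι : Type*} (s : Finset ι) (μ : ι → Measure ℝ) (ν : Measure ℝ)
    [∀ i, IsFiniteMeasure (μ i)] [SFinite ν] :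
    ν.prod (∑ i ∈ s, μ i) = ∑ i ∈ s, ν.prod (μ i) := by
  classical
  induction s using Finset.induction_on with
  | empty => simp [Measure.prod_zero]
  | insert a s h ih => rw [Finset.sum_insert h, Finset.sum_insert h, Measure.prod_add, ih]

lemma conv_explicit (c d : ℝ≥0∞) (s t : Finset ℕ) (u v : ℕ → ℝ) :
    (Measure.conv (c • ∑ i ∈ s, Measure.dirac (u i)) (d • ∑ j ∈ t, Measure.dirac (v j)))
      = (c * d) • ∑ i ∈ s, ∑ j ∈ t, Measure.dirac (u i + v j) := by
  unfold Measure.conv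
  rw [prod_smul_left, prod_smul_right, smul_smul, Measure.map_smul]
  congr 1
  rw [prod_finsetSum_left, map_finsetSum' _ _ (by fun_prop)]
  refine Finset.sum_congr rfl fun i _ => ?_
  rw [prod_finsetSum_right, map_finsetSum' _ _ (by fun_prop)]
  refine Finset.sum_congr rfl fun j _ => ?_
  rw [Measure.dirac_prod_dirac, Measure.map_dirac' (by fun_prop)]

lemma map_floor_mul (M : ℕ) (hM : 0 < M) :
    Measure.map (fun x : ℝ => ⌊x * (M:ℝ)⌋₊) (volume.restrict (Set.Ico (0:ℝ) 1))
      = (M : ℝ≥0∞)⁻¹ • ∑ j ∈ Finset.range M, Measure.dirac j := by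
  classical
  have hMr : (0:ℝ) < M := by exact_mod_cast hM
  have hmeas : Measurable (fun x : ℝ => ⌊x * (M:ℝ)⌋₊) :=
    (measurable_id.mul_const _).nat_floor
  ext T hT
  rw [Measure.map_apply hmeas hT, Measure.restrict_apply (hmeas hT)]
  set s : Finset ℕ := (Finset.range M).filter (fun j => j ∈ T) with hs
  have hset : (fun x : ℝ => ⌊x * (M:ℝ)⌋₊) ⁻¹' T ∩ Set.Ico (0:ℝ) 1
      = ⋃ j ∈ s, Set.Ico ((j:ℝ)/M) ((j+1)/M) := by
    ext x
    simp only [Set.mem_inter_iff, Set.mem_preimage, Set.mem_Ico, Set.mem_iUnion, hs,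
      Finset.mem_filter, Finset.mem_range, exists_prop]
    constructor
    · rintro ⟨hfx, hx0, hx1⟩
      have hx0M : 0 ≤ x * M := by positivity
      refine ⟨⌊x * (M:ℝ)⌋₊, ⟨?_, hfx⟩, ?_, ?_⟩
      · exact (Nat.floor_lt hx0M).mpr (by nlinarith)
      · rw [div_le_iff₀ hMr]; exact Nat.floor_le hx0M
      · rw [lt_div_iff₀ hMr]; exact Nat.lt_floor_add_one _
    · rintro ⟨j, ⟨hjM, hjT⟩, hxl, hxu⟩
      have hx0 : 0 ≤ x := le_trans (by positivity) hxl
      have h1 : (j:ℝ) ≤ x * M := by rwa [div_le_iff₀ hMr] at hxl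
      have h2 : x * M < j + 1 := by rwa [lt_div_iff₀ hMr] at hxu
      have hfl : ⌊x * (M:ℝ)⌋₊ = j := (Nat.floor_eq_iff (by positivity)).mpr ⟨h1, h2⟩
      have hjM' : (j:ℝ) + 1 ≤ M := by exact_mod_cast hjM
      exact ⟨by rwa [hfl], hx0, by nlinarith⟩
  have key : ∀ i j : ℕ, i < j →
      Disjoint (Set.Ico ((i:ℝ)/M) ((i+1)/M)) (Set.Ico ((j:ℝ)/M) ((j+1)/M)) := by
    intro i j h
    rw [Set.Ico_disjoint_Ico]
    have hij : ((i:ℝ)+1) ≤ j := by exact_mod_cast h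
    refine le_trans (min_le_left _ _) (le_trans ?_ (le_max_right _ _))
    gcongr
  have hdisj : (↑s : Set ℕ).PairwiseDisjoint
      (fun j : ℕ => Set.Ico ((j:ℝ)/M) ((j+1)/M)) := by
    intro i _ j _ hij
    rcases lt_or_gt_of_ne hij with h | h
    · exact key i j h
    · exact (key j i h).symm
  have hv : ∀ j : ℕ, volume (Set.Ico ((j:ℝ)/M) ((j+1)/M)) = (M : ℝ≥0∞)⁻¹ := by
    intro j
    rw [Real.volume_Ico]
    have h1 : ((j:ℝ)+1)/M - j/M = (M:ℝ)⁻¹ := by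
      field_simp
      ring
    rw [h1, ENNReal.ofReal_inv_of_pos hMr, ENNReal.ofReal_natCast]
  rw [hset, measure_biUnion_finset hdisj (fun j _ => measurableSet_Ico)]
  have hL : ∑ p ∈ s, volume (Set.Ico ((p:ℝ)/M) ((p+1)/M))
      = (s.card : ℝ≥0∞) * (M:ℝ≥0∞)⁻¹ := by
    rw [Finset.sum_congr rfl fun j _ => hv j, Finset.sum_const, nsmul_eq_mul]
  rw [hL, Measure.smul_apply, Measure.finset_sum_apply]
  have : ∑ j ∈ Finset.range M, (Measure.dirac j) T = (s.card : ℝ≥0∞) := by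
    have h2 : ∀ j ∈ Finset.range M, (Measure.dirac j) T
        = (if j ∈ T then (1:ℝ≥0∞) else 0) := by
      intro j _
      rw [Measure.dirac_apply' _ hT]
      by_cases h : j ∈ T <;> simp [h]
    rw [Finset.sum_congr rfl h2, Finset.sum_boole]
  rw [this, smul_eq_mul, mul_comm]

-- assume previous chunks:

lemma uniformDisc_eq (A : ℕ → Finset ℝ) (k : ℕ) :
    uniformDisc (A k)
      = ((A k).card : ℝ≥0∞)⁻¹ • ∑ r ∈ Finset.range (A k).card, Measure.dirac (efun A k r) := by
  rw [uniformDisc, sum_efun A k (fun a => Measure.dirac a)]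

lemma convSeq_eq (A : ℕ → Finset ℝ) (hne : ∀ k, (A k).Nonempty) (n : ℕ) :
    convSeq A n = ((∏ k ∈ Finset.range (n+1), (A k).card : ℕ) : ℝ≥0∞)⁻¹ •
      ∑ j ∈ Finset.range (∏ k ∈ Finset.range (n+1), (A k).card), Measure.dirac (Hfun A n j) := by
  induction n with
  | zero =>
      show uniformDisc (A 0) = _
      rw [uniformDisc_eq]
      simp only [zero_add, Finset.prod_range_one]
      congr 1
      refine Finset.sum_congr rfl fun j hj => ?_
      rw [Finset.mem_range] at hj
      show Measure.dirac (efun A 0 j) = Measure.dirac (efun A 0 (j % (A 0).card))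
      rw [Nat.mod_eq_of_lt hj]
  | succ n ih =>
      have hm : 0 < (A (n+1)).card := Finset.card_pos.mpr (hne (n+1))
      show Measure.conv (convSeq A n) (uniformDisc (A (n+1))) = _
      rw [ih, uniformDisc_eq, conv_explicit]
      have hM : (∏ k ∈ Finset.range (n+2), (A k).card)
          = (∏ k ∈ Finset.range (n+1), (A k).card) * (A (n+1)).card := by
        rw [Finset.prod_range_succ]
      rw [hM]
      congr 1
      · rw [Nat.cast_mul, ENNReal.mul_inv (Or.inr (ENNReal.natCast_ne_top _)) (Or.inl (ENNReal.natCast_ne_top _))]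
      · rw [sum_range_mul_eq (fun j => Measure.dirac (Hfun A (n+1) j))]
        refine Finset.sum_congr rfl fun q _ => Finset.sum_congr rfl fun r hr => ?_
        rw [Finset.mem_range] at hr
        have h1 : Hfun A (n+1) (q * (A (n+1)).card + r)
            = Hfun A n q + efun A (n+1) r := by
          show Hfun A n ((q * (A (n+1)).card + r) / (A (n+1)).card)
              + efun A (n+1) ((q * (A (n+1)).card + r) % (A (n+1)).card) = _
          rw [mul_comm q, Nat.mul_add_div hm, Nat.div_eq_of_lt hr, Nat.mul_add_mod,
            Nat.mod_eq_of_lt hr, add_zero]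
        rw [h1]

noncomputable def Mfun (A : ℕ → Finset ℝ) (n : ℕ) : ℕ := ∏ k ∈ Finset.range (n+1), (A k).card

noncomputable def Sfun (A : ℕ → Finset ℝ) (n : ℕ) (x : ℝ) : ℝ :=
  Hfun A n ⌊x * (Mfun A n : ℝ)⌋₊

noncomputable def xifun (A : ℕ → Finset ℝ) (k : ℕ) (x : ℝ) : ℝ :=
  efun A k (⌊x * (Mfun A k : ℝ)⌋₊ % (A k).card)

lemma measurable_Sfun (A : ℕ → Finset ℝ) (n : ℕ) : Measurable (Sfun A n) :=
  measurable_from_top.comp ((measurable_id.mul_const _).nat_floor)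

lemma measurable_xifun (A : ℕ → Finset ℝ) (k : ℕ) : Measurable (xifun A k) :=
  (measurable_from_top (f := fun j : ℕ => efun A k (j % (A k).card))).comp
    ((measurable_id.mul_const _).nat_floor)

lemma Mfun_pos (A : ℕ → Finset ℝ) (hne : ∀ k, (A k).Nonempty) (n : ℕ) : 0 < Mfun A n :=
  Finset.prod_pos fun k _ => Finset.card_pos.mpr (hne k)

lemma map_Sfun (A : ℕ → Finset ℝ) (hne : ∀ k, (A k).Nonempty) (n : ℕ) :
    Measure.map (Sfun A n) (volume.restrict (Set.Ico (0:ℝ) 1)) = convSeq A n := by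
  have hfl : Measurable (fun x : ℝ => ⌊x * (Mfun A n : ℝ)⌋₊) :=
    (measurable_id.mul_const _).nat_floor
  have h1 : Measure.map (Sfun A n) (volume.restrict (Set.Ico (0:ℝ) 1))
      = Measure.map (Hfun A n)
        (Measure.map (fun x : ℝ => ⌊x * (Mfun A n : ℝ)⌋₊)
          (volume.restrict (Set.Ico (0:ℝ) 1))) := by
    rw [Measure.map_map measurable_from_top hfl]
    rfl
  rw [h1, map_floor_mul _ (Mfun_pos A hne n), Measure.map_smul,
    map_finsetSum' _ _ measurable_from_top, convSeq_eq A hne n]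
  congr 1
  exact Finset.sum_congr rfl fun j _ => Measure.map_dirac' measurable_from_top j

lemma lintegral_xifun (A : ℕ → Finset ℝ) (hne : ∀ k, (A k).Nonempty) (k : ℕ)
    (φ : ℝ → ℝ≥0∞) :
    ∫⁻ x, φ (xifun A k x) ∂(volume.restrict (Set.Ico (0:ℝ) 1))
      = ((A k).card : ℝ≥0∞)⁻¹ * ∑ r ∈ Finset.range (A k).card, φ (efun A k r) := by
  have hfl : Measurable (fun x : ℝ => ⌊x * (Mfun A k : ℝ)⌋₊) :=
    (measurable_id.mul_const _).nat_floor
  have h1 : ∫⁻ x, φ (xifun A k x) ∂(volume.restrict (Set.Ico (0:ℝ) 1))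
      = ∫⁻ j, φ (efun A k (j % (A k).card))
          ∂(Measure.map (fun x : ℝ => ⌊x * (Mfun A k : ℝ)⌋₊)
            (volume.restrict (Set.Ico (0:ℝ) 1))) := by
    rw [lintegral_map measurable_from_top hfl]
    rfl
  rw [h1, map_floor_mul _ (Mfun_pos A hne k), lintegral_smul_measure,
    lintegral_finset_sum_measure]
  simp only [lintegral_dirac]
  set m := (A k).card with hm
  set c := ∏ i ∈ Finset.range k, (A i).card with hc
  have hmc : Mfun A k = c * m := by rw [Mfun, Finset.prod_range_succ]
  have hmpos : 0 < m := Finset.card_pos.mpr (hne k)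
  have hcpos : 0 < c := Finset.prod_pos fun i _ => Finset.card_pos.mpr (hne i)
  have h2 : ∑ j ∈ Finset.range (Mfun A k), φ (efun A k (j % m))
      = c • ∑ r ∈ Finset.range m, φ (efun A k r) := by
    rw [hmc, sum_range_mul_eq (fun j => φ (efun A k (j % m)))]
    have hq : ∀ q ∈ Finset.range c, ∑ r ∈ Finset.range m, φ (efun A k ((q * m + r) % m))
        = ∑ r ∈ Finset.range m, φ (efun A k r) := by
      intro q _
      refine Finset.sum_congr rfl fun r hr => ?_
      rw [Finset.mem_range] at hr
      rw [mul_comm q m, Nat.mul_add_mod, Nat.mod_eq_of_lt hr]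
    rw [Finset.sum_congr rfl hq, Finset.sum_const, Finset.card_range]
  rw [h2, hmc, nsmul_eq_mul, Nat.cast_mul,
    ENNReal.mul_inv (Or.inr (ENNReal.natCast_ne_top _)) (Or.inl (ENNReal.natCast_ne_top _))]
  calc ((c:ℝ≥0∞))⁻¹ * ((m:ℝ≥0∞))⁻¹ * ((c:ℝ≥0∞) * ∑ r ∈ Finset.range m, φ (efun A k r))
      = (((c:ℝ≥0∞))⁻¹ * (c:ℝ≥0∞)) * (((m:ℝ≥0∞))⁻¹ * ∑ r ∈ Finset.range m, φ (efun A k r)) := by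
        ring
    _ = ((m:ℝ≥0∞))⁻¹ * ∑ r ∈ Finset.range m, φ (efun A k r) := by
        rw [ENNReal.inv_mul_cancel (by exact_mod_cast hcpos.ne') (ENNReal.natCast_ne_top _),
          one_mul]

lemma Sfun_eq_sum (A : ℕ → Finset ℝ) (hne : ∀ k, (A k).Nonempty) (n : ℕ) (x : ℝ)
    (hx : 0 ≤ x) : Sfun A n x = ∑ k ∈ Finset.range (n+1), xifun A k x := by
  induction n with
  | zero => rw [Finset.sum_range_one]; rfl
  | succ n ih =>
      have hm : ((A (n+1)).card : ℝ) ≠ 0 := by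
        exact_mod_cast (Finset.card_pos.mpr (hne (n+1))).ne'
      have hMc : (Mfun A (n+1) : ℝ) = (Mfun A n : ℝ) * (A (n+1)).card := by
        rw [Mfun, Mfun, Finset.prod_range_succ]; push_cast; ring
      have hdiv : ⌊x * (Mfun A (n+1) : ℝ)⌋₊ / (A (n+1)).card = ⌊x * (Mfun A n : ℝ)⌋₊ := by
        have hx2 : x * (Mfun A (n+1) : ℝ) / ((A (n+1)).card : ℝ) = x * (Mfun A n : ℝ) := by
          rw [hMc, ← mul_assoc, mul_div_assoc, div_self hm, mul_one]
        rw [← Nat.floor_div_natCast, hx2]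
      rw [Finset.sum_range_succ, ← ih]
      show Hfun A n (⌊x * (Mfun A (n+1) : ℝ)⌋₊ / (A (n+1)).card)
          + efun A (n+1) (⌊x * (Mfun A (n+1) : ℝ)⌋₊ % (A (n+1)).card) = _
      rw [hdiv]
      rfl

lemma efun_nonneg (A : ℕ → Finset ℝ) (hpos : ∀ k, ∀ a ∈ A k, 0 ≤ a) (k r : ℕ) :
    0 ≤ efun A k r := by
  unfold efun
  split
  · exact hpos k _ (((A k).orderIsoOfFin rfl _).2)
  · exact le_refl _

lemma exists_weakLimit (A : ℕ → Finset ℝ) (hne : ∀ k, (A k).Nonempty)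
    (hpos : ∀ k, ∀ a ∈ A k, 0 ≤ a)
    (hsum : Summable fun k => ((A k).card : ℝ)⁻¹ * ∑ a ∈ A k, a / (1 + a)) :
    ∃ μ : Measure ℝ, IsProbabilityMeasure μ ∧ WeakLimit (convSeq A) μ := by
  classical
  set P : Measure ℝ := volume.restrict (Set.Ico (0:ℝ) 1) with hP
  haveI hPprob : IsProbabilityMeasure P :=
    ⟨by rw [hP, Measure.restrict_apply MeasurableSet.univ, Set.univ_inter, Real.volume_Ico]
        norm_num⟩
  -- nonnegativity of xifun
  have hxipos : ∀ k x, 0 ≤ xifun A k x := fun k x => efun_nonneg A hpos k _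
  -- the ENNReal-valued total sum of the g-values
  set g : ℝ → ℝ := fun a => a / (1 + a) with hg
  have hgmeas : Measurable g := measurable_id.div (measurable_const.add measurable_id)
  have hg0 : ∀ a : ℝ, 0 ≤ a → 0 ≤ g a := fun a ha => by
    simp only [hg]; positivity
  have hg1 : ∀ a : ℝ, 0 ≤ a → g a ≤ 1 := fun a ha => by
    simp only [hg]
    rw [div_le_one (by linarith)]; linarith
  set U : ℝ → ℝ≥0∞ := fun x => ∑' k, ENNReal.ofReal (g (xifun A k x)) with hU
  have hUmeas : Measurable U :=
    Measurable.ennreal_tsum fun k =>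
      ENNReal.measurable_ofReal.comp (hgmeas.comp (measurable_xifun A k))
  have hterm_nonneg : ∀ k, 0 ≤ ((A k).card : ℝ)⁻¹ * ∑ a ∈ A k, g a := by
    intro k
    apply mul_nonneg (by positivity)
    exact Finset.sum_nonneg fun a ha => hg0 a (hpos k a ha)
  have hUint : ∫⁻ x, U x ∂P ≠ ⊤ := by
    show ∫⁻ x, ∑' k, ENNReal.ofReal (g (xifun A k x)) ∂P ≠ ⊤
    have hmeas' : ∀ k : ℕ, AEMeasurable (fun x => ENNReal.ofReal (g (xifun A k x))) P :=
      fun k => (ENNReal.measurable_ofReal.comp (hgmeas.comp (measurable_xifun A k))).aemeasurable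
    rw [lintegral_tsum hmeas']
    have hterm : ∀ k, ∫⁻ x, ENNReal.ofReal (g (xifun A k x)) ∂P
        = ENNReal.ofReal (((A k).card : ℝ)⁻¹ * ∑ a ∈ A k, g a) := by
      intro k
      rw [lintegral_xifun A hne k (fun a => ENNReal.ofReal (g a))]
      rw [sum_efun A k (fun a => ENNReal.ofReal (g a))]
      rw [← ENNReal.ofReal_sum_of_nonneg (fun a ha => hg0 a (hpos k a ha))]
      rw [ENNReal.ofReal_mul (by positivity)]
      congr 1
      rw [ENNReal.ofReal_inv_of_pos (by exact_mod_cast Finset.card_pos.mpr (hne k)),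
        ENNReal.ofReal_natCast]
    rw [tsum_congr hterm, ← ENNReal.ofReal_tsum_of_nonneg hterm_nonneg hsum]
    exact ENNReal.ofReal_ne_top
  have haeU : ∀ᵐ x ∂P, U x < ⊤ := ae_lt_top hUmeas hUint
  have haeIco : ∀ᵐ x ∂P, x ∈ Set.Ico (0:ℝ) 1 := ae_restrict_mem measurableSet_Ico
  -- limit function
  set T : ℝ → ℝ≥0∞ := fun x => ∑' k, ENNReal.ofReal (xifun A k x) with hT
  have hTmeas : Measurable T :=
    Measurable.ennreal_tsum fun k => ENNReal.measurable_ofReal.comp (measurable_xifun A k)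
  set Slim : ℝ → ℝ := fun x => (T x).toReal with hSlim
  have hSlimMeas : Measurable Slim := hTmeas.ennreal_toReal
  -- pointwise: U x < ⊤ implies summability of xifun
  have hkey : ∀ x : ℝ, U x < ⊤ → Summable (fun k => xifun A k x) := by
    intro x hx
    have hgsum : Summable (fun k => g (xifun A k x)) := by
      have := ENNReal.summable_toReal hx.ne
      refine this.congr fun k => ?_
      exact ENNReal.toReal_ofReal (hg0 _ (hxipos k x))
    obtain ⟨K, hK⟩ := (Filter.eventually_atTop).mp
      (hgsum.tendsto_atTop_zero.eventually_lt_const (by norm_num : (0:ℝ) < 1/2))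
    have hbound : ∀ k, K ≤ k → xifun A k x ≤ 2 * g (xifun A k x) := by
      intro k hk
      have h2 := hK k hk
      set v := xifun A k x with hv
      have hv0 : 0 ≤ v := hxipos k x
      have h1v : (0:ℝ) < 1 + v := by linarith
      have hlt : v < 1/2 * (1 + v) := by
        have := (div_lt_iff₀ h1v).mp h2
        linarith
      have hvle1 : v ≤ 1 := by linarith
      rw [hg, mul_div_assoc']
      rw [le_div_iff₀ h1v]
      nlinarith
    rw [← summable_nat_add_iff K]
    refine Summable.of_nonneg_of_le (fun k => hxipos _ x) (fun k => hbound (k + K) (by omega)) ?_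
    exact ((summable_nat_add_iff K).mpr (hgsum.mul_left 2))
  -- a.e. convergence of Sfun to Slim
  have haeconv : ∀ᵐ x ∂P, Tendsto (fun n => Sfun A n x) atTop (nhds (Slim x)) := by
    filter_upwards [haeU, haeIco] with x hxU hxI
    have hsummable := hkey x hxU
    have hnn : ∀ k, 0 ≤ xifun A k x := fun k => hxipos k x
    have hTx : T x = ENNReal.ofReal (∑' k, xifun A k x) := by
      rw [hT, ENNReal.ofReal_tsum_of_nonneg hnn hsummable]
    have hSlimx : Slim x = ∑' k, xifun A k x := by
      rw [hSlim]
      simp only [hTx]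
      exact ENNReal.toReal_ofReal (tsum_nonneg hnn)
    have h1 : Tendsto (fun n => ∑ k ∈ Finset.range n, xifun A k x) atTop
        (nhds (∑' k, xifun A k x)) := hsummable.hasSum.tendsto_sum_nat
    have h2 : Tendsto (fun n => ∑ k ∈ Finset.range (n+1), xifun A k x) atTop
        (nhds (∑' k, xifun A k x)) := h1.comp (tendsto_add_atTop_nat 1)
    rw [hSlimx]
    refine h2.congr fun n => ?_
    exact (Sfun_eq_sum A hne n x hxI.1).symm
  -- the limit measure
  refine ⟨Measure.map Slim P, Measure.isProbabilityMeasure_map hSlimMeas.aemeasurable, ?_⟩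
  intro f
  have hInt : ∀ n, ∫ x, f x ∂(convSeq A n) = ∫ x, f (Sfun A n x) ∂P := by
    intro n
    rw [← map_Sfun A hne n,
      integral_map (measurable_Sfun A n).aemeasurable f.continuous.aestronglyMeasurable]
  have hIntLim : ∫ x, f x ∂(Measure.map Slim P) = ∫ x, f (Slim x) ∂P :=
    integral_map hSlimMeas.aemeasurable f.continuous.aestronglyMeasurable
  simp only [hInt, hIntLim]
  refine tendsto_integral_of_dominated_convergence (fun _ => ‖f‖)
    (fun n => (f.continuous.measurable.comp (measurable_Sfun A n)).aestronglyMeasurable)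
    (integrable_const _) (fun n => ?_) ?_
  · exact Filter.Eventually.of_forall fun x => f.norm_coe_le_norm _
  · filter_upwards [haeconv] with x hx
    exact (f.continuous.tendsto (Slim x)).comp hx

theorem nearly_consecutive_infinite_convolution_exists
    (b N : ℕ → ℕ) (B : ℕ → Finset ℕ)
    (hb : ∀ k, 2 ≤ b k) (hbN : ∀ k, b k ≤ N k) (hdvd : ∀ k, b k ∣ N k)
    (hBcard : ∀ k, (B k).card = b k)
    (hBmod : ∀ k, (B k).image (fun x => x % N k) = Finset.range (b k))
    (c : ℕ → ℕ) (hc : ∀ k, c k = ((B k) \ Finset.range (b k)).card)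
    (hsum1 : Summable (fun k =>
      ((b k : ℝ) - 1) / ∏ i ∈ Finset.range (k + 1), (N i : ℝ)))
    (hsum2 : Summable (fun k => (c k : ℝ) / (b k : ℝ)))
    (A : ℕ → Finset ℝ)
    (hA : ∀ k, A k = (B k).image
      (fun x : ℕ => (x : ℝ) / ∏ i ∈ Finset.range (k + 1), (N i : ℝ))) :
    Summable (fun k => ((A k).card : ℝ)⁻¹ * ∑ a ∈ A k, a / (1 + a)) ∧
      ∃ μ : Measure ℝ, IsProbabilityMeasure μ ∧ WeakLimit (convSeq A) μ := by
  have hPk : ∀ k, (0:ℝ) < ∏ i ∈ Finset.range (k + 1), (N i : ℝ) := by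
    intro k
    apply Finset.prod_pos
    intro i _
    have : 2 ≤ N i := le_trans (hb i) (hbN i)
    exact_mod_cast Nat.lt_of_lt_of_le (by norm_num) this
  have hinj : ∀ k, Function.Injective
      (fun x : ℕ => (x : ℝ) / ∏ i ∈ Finset.range (k + 1), (N i : ℝ)) := by
    intro k x y h
    simp only at h
    have h2 : (x:ℝ) = y := by
      have := congrArg (fun t => t * ∏ i ∈ Finset.range (k + 1), (N i : ℝ)) h
      simpa [div_mul_cancel₀, (hPk k).ne'] using this
    exact_mod_cast h2
  have hAcard : ∀ k, (A k).card = b k := by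
    intro k
    rw [hA k, Finset.card_image_of_injective _ (hinj k), hBcard]
  have hApos : ∀ k, ∀ a ∈ A k, 0 ≤ a := by
    intro k a ha
    rw [hA k, Finset.mem_image] at ha
    obtain ⟨x, _, rfl⟩ := ha
    positivity
  have hsummable : Summable (fun k => ((A k).card : ℝ)⁻¹ * ∑ a ∈ A k, a / (1 + a)) := by
    set P : ℕ → ℝ := fun k => ∏ i ∈ Finset.range (k + 1), (N i : ℝ) with hPdef
    have hterm_nonneg : ∀ k, 0 ≤ ((A k).card : ℝ)⁻¹ * ∑ a ∈ A k, a / (1 + a) := by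
      intro k
      apply mul_nonneg (by positivity)
      apply Finset.sum_nonneg
      intro a ha
      have := hApos k a ha
      positivity
    refine Summable.of_nonneg_of_le hterm_nonneg ?_ (hsum1.add hsum2)
    intro k
    have hbk : (0:ℝ) < b k := by
      have := hb k; positivity
    have hAsum : ∑ a ∈ A k, a / (1 + a) = ∑ x ∈ B k, ((x:ℝ)/P k) / (1 + (x:ℝ)/P k) := by
      rw [hA k, Finset.sum_image (fun x _ y _ h => hinj k h)]
    have hsplit : ∑ x ∈ B k, ((x:ℝ)/P k) / (1 + (x:ℝ)/P k)
        = ∑ x ∈ B k ∩ Finset.range (b k), ((x:ℝ)/P k) / (1 + (x:ℝ)/P k)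
          + ∑ x ∈ B k \ Finset.range (b k), ((x:ℝ)/P k) / (1 + (x:ℝ)/P k) :=
      (Finset.sum_inter_add_sum_sdiff _ _ _).symm
    have h1 : ∑ x ∈ B k ∩ Finset.range (b k), ((x:ℝ)/P k) / (1 + (x:ℝ)/P k)
        ≤ (b k : ℝ) * (((b k : ℝ) - 1) / P k) := by
      have hb1 : (0:ℝ) ≤ ((b k : ℝ) - 1) / P k := by
        apply div_nonneg _ (hPk k).le
        have : (2:ℝ) ≤ b k := by exact_mod_cast hb k
        linarith
      calc ∑ x ∈ B k ∩ Finset.range (b k), ((x:ℝ)/P k) / (1 + (x:ℝ)/P k)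
          ≤ ∑ x ∈ B k ∩ Finset.range (b k), (((b k : ℝ) - 1) / P k) := by
            apply Finset.sum_le_sum
            intro x hx
            have hxb : x < b k := Finset.mem_range.mp (Finset.mem_inter.mp hx).2
            have hx0 : (0:ℝ) ≤ (x:ℝ)/P k := by positivity
            calc ((x:ℝ)/P k) / (1 + (x:ℝ)/P k) ≤ ((x:ℝ)/P k) / 1 := by
                  apply div_le_div_of_nonneg_left hx0 one_pos
                  linarith
              _ = (x:ℝ)/P k := div_one _
              _ ≤ ((b k : ℝ) - 1) / P k := by
                  have hxx : (x:ℝ) ≤ (b k : ℝ) - 1 := by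
                    have : (x:ℝ) + 1 ≤ b k := by exact_mod_cast hxb
                    linarith
                  have hp := hPk k
                  gcongr
        _ = ((B k ∩ Finset.range (b k)).card : ℝ) * (((b k : ℝ) - 1) / P k) := by
            rw [Finset.sum_const, nsmul_eq_mul]
        _ ≤ (b k : ℝ) * (((b k : ℝ) - 1) / P k) := by
            apply mul_le_mul_of_nonneg_right _ hb1
            have : (B k ∩ Finset.range (b k)).card ≤ b k := by
              calc (B k ∩ Finset.range (b k)).card ≤ (Finset.range (b k)).card :=
                    Finset.card_le_card (Finset.inter_subset_right)
                _ = b k := Finset.card_range _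
            exact_mod_cast this
    have h2 : ∑ x ∈ B k \ Finset.range (b k), ((x:ℝ)/P k) / (1 + (x:ℝ)/P k) ≤ (c k : ℝ) := by
      calc ∑ x ∈ B k \ Finset.range (b k), ((x:ℝ)/P k) / (1 + (x:ℝ)/P k)
          ≤ ∑ x ∈ B k \ Finset.range (b k), (1:ℝ) := by
            apply Finset.sum_le_sum
            intro x _
            have hx0 : (0:ℝ) ≤ (x:ℝ)/P k := by positivity
            rw [div_le_one (by linarith)]
            linarith
        _ = ((B k \ Finset.range (b k)).card : ℝ) := by
            rw [Finset.sum_const, nsmul_eq_mul, mul_one]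
        _ = (c k : ℝ) := by rw [hc k]
    calc ((A k).card : ℝ)⁻¹ * ∑ a ∈ A k, a / (1 + a)
        = ((b k : ℝ))⁻¹ * ∑ x ∈ B k, ((x:ℝ)/P k) / (1 + (x:ℝ)/P k) := by
          rw [hAcard k, hAsum]
      _ ≤ ((b k : ℝ))⁻¹ * ((b k : ℝ) * (((b k : ℝ) - 1) / P k) + (c k : ℝ)) := by
          apply mul_le_mul_of_nonneg_left _ (by positivity)
          rw [hsplit]
          exact add_le_add h1 h2
      _ = ((b k : ℝ) - 1) / P k + (c k : ℝ) / (b k : ℝ) := by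
          field_simp
  refine ⟨hsummable, ?_⟩
  apply exists_weakLimit A ?_ hApos hsummable
  intro k
  apply Finset.card_pos.mp
  rw [hAcard k]
  exact lt_of_lt_of_le (by norm_num) (hb k)
end

section
/- Let $\{b_k\}$ and $\{N_k\}$ be sequences of positive integers with $N_k \ge b_k \ge 2$, $b_k \mid N_k$. Suppose $B_k \subseteq \mathbb{Z}_{\ge 0}$ with $B_k \equiv \{0,\dots,b_k-1\}\pmod{N_k}$, and $\sum_k c_k/b_k < \infty$ where $c_k = \#(B_k\setminus\{0,\dots,b_k-1\})$. Then there exist $\varepsilon > 0$ and $n_0 \ge 1$ such that for all $n \ge n_0$ and all $\xi \in [-2/3,2/3]$, $\left|\prod_{k=1}^\infty m_{B_{n+k}}\left(\frac{\xi}{N_{n+1}\cdots N_{n+k}}\right)\right| \ge \varepsilon$, where $m_B(\xi) = \frac{1}{\#B}\sum_{b\in B}e^{-2\pi i b\xi}$. -/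
open Filter Finset

/-- `maskFn B ξ = (1/#B) ∑_{x ∈ B} e^{-2πi x ξ}`, the Fourier transform of the
uniform discrete measure on `B`. -/
noncomputable def maskFn (B : Finset ℕ) (ξ : ℝ) : ℂ :=
  ((B.card : ℂ))⁻¹ * ∑ x ∈ B, Complex.exp (-2 * Real.pi * Complex.I * (x : ℂ) * (ξ : ℂ))

lemma expII (θ : ℝ) : ‖Complex.exp ((θ:ℂ) * Complex.I) - 1‖ ≤ |θ| := by
  have h : Complex.exp ((θ:ℂ) * Complex.I) - 1
      = Complex.ofReal (Real.cos θ - 1) + Complex.ofReal (Real.sin θ) * Complex.I := by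
    rw [Complex.exp_mul_I]; push_cast; ring
  rw [h, Complex.norm_def, Complex.normSq_add_mul_I]
  rw [show |θ| = Real.sqrt (θ^2) by rw [Real.sqrt_sq_eq_abs]]
  apply Real.sqrt_le_sqrt
  nlinarith [Real.sin_sq_add_cos_sq θ, Real.one_sub_sq_div_two_le_cos (x := θ)]
lemma expnorm1 (θ : ℝ) : ‖Complex.exp ((θ:ℂ) * Complex.I)‖ = 1 := by
  rw [Complex.norm_exp]; simp
lemma exp_neg3 {x : ℝ} (h0 : 0 ≤ x) (h1 : x ≤ 76/100) : Real.exp (-(3*x)) ≤ 1 - x := by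
  have h := Real.add_one_le_exp (3/2*x)
  have e := Real.exp_pos (3/2*x)
  have key : Real.exp (-(3*x)) * (Real.exp (3/2*x) * Real.exp (3/2*x)) = 1 := by
    rw [← Real.exp_add, ← Real.exp_add]; ring_nf; exact Real.exp_zero
  have hE2 : (1+3/2*x)*(1+3/2*x) ≤ Real.exp (3/2*x) * Real.exp (3/2*x) := by nlinarith
  have hx : Real.exp (-(3*x)) * ((1+3/2*x)*(1+3/2*x)) ≤ 1 := by
    calc Real.exp (-(3*x)) * ((1+3/2*x)*(1+3/2*x))
        ≤ Real.exp (-(3*x)) * (Real.exp (3/2*x) * Real.exp (3/2*x)) := by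
          exact mul_le_mul_of_nonneg_left hE2 (Real.exp_pos _).le
      _ = 1 := key
  have hq : (0:ℝ) ≤ 2 - 3/4*x - 9/4*x^2 := by nlinarith
  nlinarith [mul_nonneg h0 hq]
lemma sum_sq_le (m : ℕ) : ∑ x ∈ range m, ((m:ℝ) - 1 - 2*x)^2 ≤ (m:ℝ)^3 / 3 := by
  have key : ∀ n:ℕ, (∑ x ∈ range n, (x:ℝ) = n*(n-1)/2) ∧
      (∑ x ∈ range n, (x:ℝ)^2 = n*(n-1)*(2*n-1)/6) := by
    intro n
    induction n with
    | zero => simp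
    | succ n ih =>
      constructor
      · rw [Finset.sum_range_succ, ih.1]; push_cast; ring
      · rw [Finset.sum_range_succ, ih.2]; push_cast; ring
  have h1 : ∑ x ∈ range m, ((m:ℝ) - 1 - 2*x)^2
      = ∑ x ∈ range m, (((m:ℝ)-1)^2 - (4*((m:ℝ)-1))*x + 4*x^2) :=
    Finset.sum_congr rfl (by intros; ring)
  rw [h1, Finset.sum_add_distrib, Finset.sum_sub_distrib, Finset.sum_const,
    ← Finset.mul_sum, ← Finset.mul_sum, (key m).1, (key m).2, card_range, nsmul_eq_mul]
  have : (0:ℝ) ≤ m := Nat.cast_nonneg m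
  nlinarith
lemma maskFn_lower (bk : ℕ) (B : Finset ℕ) (hb : 1 ≤ bk) (hcard : B.card = bk) (ξ : ℝ) :
    1 - (Real.pi*bk*ξ)^2/6 - 2*(((B \ Finset.range bk).card : ℝ))/bk ≤ ‖maskFn B ξ‖ := by
  have hbpos : (0:ℝ) < bk := by exact_mod_cast hb
  set e : ℕ → ℂ := fun x => Complex.exp (((-2*Real.pi*x*ξ : ℝ):ℂ)*Complex.I) with he
  have hmask : maskFn B ξ = ((bk:ℂ))⁻¹ * ∑ x ∈ B, e x := by
    rw [maskFn, hcard]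
    congr 1
    refine Finset.sum_congr rfl fun x _ => ?_
    rw [he]; congr 1; push_cast; ring
  -- card of range \ B equals card of B \ range
  set c := (B \ Finset.range bk).card with hcdef
  have hcR : ((Finset.range bk) \ B).card = c := by
    have h1 := Finset.card_sdiff_add_card_inter B (Finset.range bk)
    have h2 := Finset.card_sdiff_add_card_inter (Finset.range bk) B
    rw [Finset.inter_comm] at h2
    rw [hcard] at h1
    rw [Finset.card_range] at h2
    omega
  -- rotation
  set a : ℝ := Real.pi*((bk:ℝ)-1)*ξ with ha
  have hre : (Complex.exp ((a:ℂ)*Complex.I) * ∑ x ∈ Finset.range bk, e x).re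
      = ∑ x ∈ Finset.range bk, Real.cos (Real.pi*ξ*((bk:ℝ)-1-2*x)) := by
    rw [Finset.mul_sum, Complex.re_sum]
    refine Finset.sum_congr rfl fun x _ => ?_
    rw [he]
    rw [← Complex.exp_add]
    rw [show (a:ℂ)*Complex.I + ((-2*Real.pi*x*ξ : ℝ):ℂ)*Complex.I
        = ((Real.pi*ξ*((bk:ℝ)-1-2*x) : ℝ):ℂ)*Complex.I by push_cast [ha]; ring]
    rw [Complex.exp_ofReal_mul_I_re]
  have hcos : (bk:ℝ)*(1 - (Real.pi*bk*ξ)^2/6)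
      ≤ ∑ x ∈ Finset.range bk, Real.cos (Real.pi*ξ*((bk:ℝ)-1-2*x)) := by
    have step1 : ∑ x ∈ Finset.range bk, (1 - (Real.pi*ξ)^2*((bk:ℝ)-1-2*x)^2/2)
        ≤ ∑ x ∈ Finset.range bk, Real.cos (Real.pi*ξ*((bk:ℝ)-1-2*x)) := by
      refine Finset.sum_le_sum fun x _ => ?_
      have := Real.one_sub_sq_div_two_le_cos (x := Real.pi*ξ*((bk:ℝ)-1-2*x))
      nlinarith [this]
    have step2 : ∑ x ∈ Finset.range bk, (1 - (Real.pi*ξ)^2*((bk:ℝ)-1-2*x)^2/2)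
        = (bk:ℝ) - (Real.pi*ξ)^2/2 * ∑ x ∈ Finset.range bk, ((bk:ℝ)-1-2*x)^2 := by
      rw [Finset.sum_sub_distrib, Finset.sum_const, Finset.card_range, nsmul_eq_mul, mul_one]
      congr 1
      rw [Finset.mul_sum]
      exact Finset.sum_congr rfl fun x _ => by ring
    have step3 := sum_sq_le bk
    have hpx : (0:ℝ) ≤ (Real.pi*ξ)^2 := sq_nonneg _
    nlinarith [step1, step2, step3]
  have hSR : (bk:ℝ)*(1 - (Real.pi*bk*ξ)^2/6) ≤ ‖∑ x ∈ Finset.range bk, e x‖ := by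
    have h1 : (Complex.exp ((a:ℂ)*Complex.I) * ∑ x ∈ Finset.range bk, e x).re
        ≤ ‖Complex.exp ((a:ℂ)*Complex.I) * ∑ x ∈ Finset.range bk, e x‖ :=
      Complex.re_le_norm _
    rw [norm_mul, expnorm1, one_mul] at h1
    rw [hre] at h1
    linarith [hcos]
  have hdiff : ‖(∑ x ∈ B, e x) - ∑ x ∈ Finset.range bk, e x‖ ≤ 2*c := by
    rw [← Finset.sum_sdiff_sub_sum_sdiff]
    calc ‖(∑ x ∈ B \ Finset.range bk, e x) - ∑ x ∈ Finset.range bk \ B, e x‖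
        ≤ ‖∑ x ∈ B \ Finset.range bk, e x‖ + ‖∑ x ∈ Finset.range bk \ B, e x‖ :=
          norm_sub_le _ _
      _ ≤ (c:ℝ) + (c:ℝ) := by
          gcongr <;>
          · refine (norm_sum_le _ _).trans ?_
            refine le_trans (Finset.sum_le_sum fun x _ => (expnorm1 _).le) ?_
            simp [hcR, hcdef]
      _ = 2*c := by ring
  have hSB : (bk:ℝ)*(1 - (Real.pi*bk*ξ)^2/6) - 2*c ≤ ‖∑ x ∈ B, e x‖ := by
    have h2 : ‖∑ x ∈ Finset.range bk, e x‖
        ≤ ‖∑ x ∈ B, e x‖ + ‖(∑ x ∈ B, e x) - ∑ x ∈ Finset.range bk, e x‖ := by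
      have := norm_sub_le (∑ x ∈ B, e x) ((∑ x ∈ B, e x) - ∑ x ∈ Finset.range bk, e x)
      simpa using this
    linarith
  rw [hmask, norm_mul, norm_inv, Complex.norm_natCast]
  rw [inv_mul_eq_div, le_div_iff₀ hbpos]
  have hc' : (0:ℝ) ≤ c := Nat.cast_nonneg c
  have : (1 - (Real.pi*bk*ξ)^2/6 - 2*c/bk) * bk
      = (bk:ℝ)*(1 - (Real.pi*bk*ξ)^2/6) - 2*c := by field_simp
  rw [this]; exact hSB
lemma maskFn_sub_one (bk : ℕ) (B : Finset ℕ) (hb : 1 ≤ bk) (hcard : B.card = bk) (ξ : ℝ) :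
    ‖maskFn B ξ - 1‖ ≤ 2*Real.pi*bk*|ξ| + 2*(((B \ Finset.range bk).card:ℝ))/bk := by
  have hbpos : (0:ℝ) < bk := by exact_mod_cast hb
  set e : ℕ → ℂ := fun x => Complex.exp (((-2*Real.pi*x*ξ : ℝ):ℂ)*Complex.I) with he
  have hmask : maskFn B ξ - 1 = ((bk:ℂ))⁻¹ * ∑ x ∈ B, (e x - 1) := by
    rw [Finset.sum_sub_distrib, Finset.sum_const, hcard, maskFn, hcard]
    rw [mul_sub, nsmul_eq_mul, mul_one]
    have hbne : ((bk:ℂ)) ≠ 0 := by exact_mod_cast (by positivity : (0:ℝ) < (bk:ℝ)).ne'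
    rw [inv_mul_cancel₀ hbne]
    congr 2
    refine Finset.sum_congr rfl fun x _ => ?_
    rw [he]; congr 1; push_cast; ring
  set c := (B \ Finset.range bk).card with hcdef
  have hsum : ∑ x ∈ B, ‖e x - 1‖ ≤ (bk:ℝ)*(2*Real.pi*bk*|ξ|) + 2*c := by
    rw [← Finset.sum_inter_add_sum_sdiff B (Finset.range bk) (fun x => ‖e x - 1‖)]
    have h1 : ∑ x ∈ B ∩ Finset.range bk, ‖e x - 1‖ ≤ (bk:ℝ)*(2*Real.pi*bk*|ξ|) := by
      have hb1 : ∀ x ∈ B ∩ Finset.range bk, ‖e x - 1‖ ≤ 2*Real.pi*bk*|ξ| := by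
        intro x hx
        have hxlt : x < bk := by
          have := Finset.mem_inter.1 hx
          exact Finset.mem_range.1 this.2
        refine (expII _).trans ?_
        rw [abs_mul, abs_mul, abs_mul]
        have hx' : (x:ℝ) ≤ bk := by exact_mod_cast hxlt.le
        have := Real.pi_pos
        have h2 : |(-2:ℝ)| = 2 := by norm_num
        rw [h2, abs_of_pos Real.pi_pos, Nat.abs_cast]
        nlinarith [abs_nonneg ξ, mul_le_mul_of_nonneg_right hx' (mul_nonneg (by positivity : (0:ℝ) ≤ 2*Real.pi) (abs_nonneg ξ))]
      calc ∑ x ∈ B ∩ Finset.range bk, ‖e x - 1‖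
          ≤ ∑ _x ∈ B ∩ Finset.range bk, (2*Real.pi*bk*|ξ|) := Finset.sum_le_sum hb1
        _ = ((B ∩ Finset.range bk).card : ℝ) * (2*Real.pi*bk*|ξ|) := by
            rw [Finset.sum_const, nsmul_eq_mul]
        _ ≤ (bk:ℝ)*(2*Real.pi*bk*|ξ|) := by
            have hcle : (B ∩ Finset.range bk).card ≤ bk := by
              rw [← hcard]; exact Finset.card_le_card Finset.inter_subset_left
            have : ((B ∩ Finset.range bk).card : ℝ) ≤ (bk:ℝ) := by exact_mod_cast hcle
            have hpos : (0:ℝ) ≤ 2*Real.pi*bk*|ξ| := by positivity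
            nlinarith
    have h2 : ∑ x ∈ B \ Finset.range bk, ‖e x - 1‖ ≤ 2*c := by
      calc ∑ x ∈ B \ Finset.range bk, ‖e x - 1‖
          ≤ ∑ _x ∈ B \ Finset.range bk, (2:ℝ) := by
            refine Finset.sum_le_sum fun x _ => ?_
            refine (norm_sub_le _ _).trans ?_
            rw [he, expnorm1]; norm_num
        _ = 2*c := by rw [Finset.sum_const, nsmul_eq_mul]; ring
    linarith
  rw [hmask, norm_mul, norm_inv, Complex.norm_natCast, inv_mul_eq_div, div_le_iff₀ hbpos]
  calc ‖∑ x ∈ B, (e x - 1)‖ ≤ ∑ x ∈ B, ‖e x - 1‖ := norm_sum_le _ _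
    _ ≤ (bk:ℝ)*(2*Real.pi*bk*|ξ|) + 2*c := hsum
    _ = (2*Real.pi*bk*|ξ| + 2*c/bk) * bk := by field_simp

set_option maxHeartbeats 2000000 in
/-- Uniform lower bound for the Fourier transforms of the tail measures `ν_{>n}`:
the infinite product `∏_{k≥1} m_{B_{n+k}}(ξ/(N_{n+1}⋯N_{n+k}))` is uniformly bounded
below on `[-2/3, 2/3]` for all large `n`. -/
theorem tail_fourier_transform_lower_bound
    (b N : ℕ → ℕ) (B : ℕ → Finset ℕ)
    (hb : ∀ k, 2 ≤ b k) (hbN : ∀ k, b k ≤ N k) (hdvd : ∀ k, b k ∣ N k)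
    (hBcard : ∀ k, (B k).card = b k)
    (hBmod : ∀ k, (B k).image (fun x => x % N k) = Finset.range (b k))
    (c : ℕ → ℕ) (hc : ∀ k, c k = ((B k) \ Finset.range (b k)).card)
    (hsum : Summable (fun k => (c k : ℝ) / (b k : ℝ))) :
    ∃ ε > (0 : ℝ), ∃ n₀ : ℕ, ∀ n ≥ n₀, ∀ ξ ∈ Set.Icc (-(2 : ℝ) / 3) (2 / 3),
      ε ≤ ‖∏' k : ℕ, maskFn (B (n + k))
            (ξ / ∏ i ∈ Finset.Icc n (n + k), (N i : ℝ))‖ := by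
  set S : ℝ := ∑' j, (c j : ℝ) / (b j : ℝ) with hSdef
  have hS0 : 0 ≤ S := tsum_nonneg fun j => by positivity
  clear_value S
  have hπ : Real.pi < 3.15 := Real.pi_lt_d2
  have hπ0 : 0 < Real.pi := Real.pi_pos
  refine ⟨Real.exp (-(3*(8*Real.pi^2/81 + 2*S))), Real.exp_pos _, ?_⟩
  obtain ⟨n₀, hn₀⟩ := eventually_atTop.1
    (hsum.tendsto_atTop_zero.eventually_lt_const (by norm_num : (0:ℝ) < 1/100))
  refine ⟨n₀, fun n hn ξ hξ => ?_⟩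
  obtain ⟨hξ1, hξ2⟩ := hξ
  have hξabs : |ξ| ≤ 2/3 := abs_le.2 ⟨by linarith, hξ2⟩
  set P : ℕ → ℝ := fun k => ∏ i ∈ Finset.Icc n (n + k), (N i : ℝ) with hPdef
  set g : ℕ → ℂ := fun k => maskFn (B (n + k)) (ξ / P k) with hgdef
  -- positivity and size of P
  have hNpos : ∀ i, 0 < N i := fun i => lt_of_lt_of_le (by linarith [hb i]) (hbN i)
  have hPpos : ∀ k, 0 < P k := fun k =>
    Finset.prod_pos fun i _ => by exact_mod_cast hNpos i
  have hPnat : ∀ k, b (n + k) * 2^k ≤ ∏ i ∈ Finset.Icc n (n + k), N i := by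
    intro k
    rw [← Finset.Ico_add_one_right_eq_Icc, Finset.prod_Ico_succ_top (Nat.le_add_right n k)]
    have h2k : 2^k ≤ ∏ i ∈ Finset.Ico n (n + k), N i := by
      calc (2:ℕ)^k = ∏ _i ∈ Finset.Ico n (n + k), 2 := by
            rw [Finset.prod_const, Nat.card_Ico]; congr 1; omega
        _ ≤ ∏ i ∈ Finset.Ico n (n + k), N i :=
            Finset.prod_le_prod' fun i _ => le_trans (hb i) (hbN i)
    calc b (n + k) * 2^k ≤ N (n + k) * ∏ i ∈ Finset.Ico n (n + k), N i :=
          Nat.mul_le_mul (hbN (n+k)) h2k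
      _ = (∏ i ∈ Finset.Ico n (n + k), N i) * N (n + k) := Nat.mul_comm _ _
  have hPk : ∀ k, (b (n + k) : ℝ) * 2^k ≤ P k := by
    intro k
    simp only [hPdef]
    have := hPnat k
    rw [← Nat.cast_prod]
    exact_mod_cast Nat.cast_le.2 this
  have hbpos : ∀ j, (0:ℝ) < b j := fun j => by
    have := hb j; positivity
  -- small c/b beyond n₀
  have hcb : ∀ k, (c (n + k) : ℝ) / (b (n + k)) < 1/100 := fun k =>
    hn₀ (n + k) (le_trans hn (Nat.le_add_right n k))
  have hcb0 : ∀ j, (0:ℝ) ≤ (c j : ℝ) / (b j) := fun j => by positivity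
  -- δ and factor lower bound
  set δ : ℕ → ℝ := fun k => 2*Real.pi^2/27 * (1/4:ℝ)^k + 2*(c (n + k) : ℝ)/(b (n + k))
    with hδdef
  clear_value δ
  have hδ0 : ∀ k, 0 ≤ δ k := fun k => by
    have : (0:ℝ) ≤ (1/4:ℝ)^k := by positivity
    have := hcb0 (n+k)
    simp only [hδdef]
    positivity
  have hδ1 : ∀ k, δ k ≤ 76/100 := by
    intro k
    have h4 : ((1:ℝ)/4)^k ≤ 1 := pow_le_one₀ (by norm_num) (by norm_num)
    have h4' : (0:ℝ) ≤ (1/4:ℝ)^k := by positivity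
    have := hcb k
    simp only [hδdef]
    have hπ2 : Real.pi^2 ≤ 9.9225 := by nlinarith
    nlinarith [mul_le_mul_of_nonneg_left h4 (by positivity : (0:ℝ) ≤ 2*Real.pi^2/27),
      mul_div_assoc (2:ℝ) ((c (n+k)):ℝ) ((b (n+k)):ℝ)]
  -- bound on π b ξ/P
  have hbP : ∀ k, (b (n + k) : ℝ) / P k ≤ (1/2:ℝ)^k := by
    intro k
    rw [div_le_iff₀ (hPpos k)]
    have h2k : (0:ℝ) < 2^k := by positivity
    have := hPk k
    have heq : ((1:ℝ)/2)^k * P k = P k / 2^k := by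
      rw [div_pow, one_pow]; ring
    rw [heq, le_div_iff₀ h2k]
    exact this
  have hkey : ∀ k, (Real.pi * (b (n + k)) * (ξ / P k))^2 / 6
      ≤ 2*Real.pi^2/27 * (1/4:ℝ)^k := by
    intro k
    have hu0 : (0:ℝ) ≤ (b (n + k) : ℝ) / P k := le_of_lt (by
      have := hbpos (n+k); have := hPpos k; positivity)
    have habs : |((b (n + k) : ℝ) / P k) * ξ| ≤ (1/2:ℝ)^k * (2/3) := by
      rw [abs_mul, abs_of_nonneg hu0]
      have := hbP k
      have h2 : (0:ℝ) ≤ (1/2:ℝ)^k := by positivity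
      nlinarith [abs_nonneg ξ]
    have hsq : (((b (n + k) : ℝ) / P k) * ξ)^2 ≤ ((1/2:ℝ)^k * (2/3))^2 := by
      rw [← sq_abs]
      exact pow_le_pow_left₀ (abs_nonneg _) habs 2
    have heq : (Real.pi * (b (n + k)) * (ξ / P k))^2
        = Real.pi^2 * (((b (n + k) : ℝ) / P k) * ξ)^2 := by
      field_simp
    have h14 : (((1:ℝ)/2)^k)^2 = (1/4:ℝ)^k := by
      rw [← pow_mul, mul_comm, pow_mul]; norm_num
    rw [heq]
    calc Real.pi^2 * (((b (n + k) : ℝ) / P k) * ξ)^2 / 6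
        ≤ Real.pi^2 * ((1/2:ℝ)^k * (2/3))^2 / 6 := by
          have hπsq : (0:ℝ) ≤ Real.pi^2 := sq_nonneg _
          nlinarith
      _ = 2*Real.pi^2/27 * (1/4:ℝ)^k := by
          rw [mul_pow, h14]; ring
  have hlow : ∀ k, 1 - δ k ≤ ‖g k‖ := by
    intro k
    have h := maskFn_lower (b (n + k)) (B (n + k)) (le_trans one_le_two (hb _))
      (hBcard _) (ξ / P k)
    rw [← hc] at h
    have := hkey k
    simp only [hgdef, hδdef]
    nlinarith [h]
  have hne : ∀ k, g k ≠ 0 := by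
    intro k
    have h1 := hlow k
    have h2 := hδ1 k
    intro h0
    rw [h0, norm_zero] at h1
    linarith
  -- partial sums of δ
  have hgeom : ∀ K, ∑ k ∈ Finset.range K, ((1:ℝ)/4)^k ≤ 4/3 := by
    intro K
    have hs := summable_geometric_of_lt_one (by norm_num : (0:ℝ) ≤ 1/4) (by norm_num)
    have := hs.sum_le_tsum (Finset.range K) (fun k _ => by positivity)
    rw [tsum_geometric_of_lt_one (by norm_num) (by norm_num)] at this
    calc ∑ k ∈ Finset.range K, ((1:ℝ)/4)^k ≤ (1 - 1/4:ℝ)⁻¹ := this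
      _ = 4/3 := by norm_num
  have htail : ∀ K, ∑ k ∈ Finset.range K, (c (n + k) : ℝ) / (b (n + k)) ≤ S := by
    intro K
    have h1 : ∑ j ∈ Finset.Ico n (n + K), (c j : ℝ) / (b j)
        = ∑ k ∈ Finset.range K, (c (n + k) : ℝ) / (b (n + k)) := by
      rw [Finset.sum_Ico_eq_sum_range, Nat.add_sub_cancel_left]
    rw [← h1, hSdef]
    exact hsum.sum_le_tsum _ (fun j _ => hcb0 j)
  have hδsum : ∀ K, ∑ k ∈ Finset.range K, δ k ≤ 8*Real.pi^2/81 + 2*S := by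
    intro K
    simp only [hδdef]
    rw [Finset.sum_add_distrib, ← Finset.mul_sum]
    have h2' : ∑ x ∈ Finset.range K, 2*(c (n+x):ℝ)/(b (n+x))
        = 2 * ∑ x ∈ Finset.range K, (c (n+x):ℝ)/(b (n+x)) := by
      rw [Finset.mul_sum]
      exact Finset.sum_congr rfl fun x _ => by ring
    rw [h2']
    have h1 := hgeom K
    have h2 := htail K
    have hg0 : (0:ℝ) ≤ ∑ k ∈ Finset.range K, ((1:ℝ)/4)^k :=
      Finset.sum_nonneg fun k _ => by positivity
    nlinarith [sq_nonneg Real.pi]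
  -- partial product bound
  have hprod : ∀ K, Real.exp (-(3*(8*Real.pi^2/81 + 2*S)))
      ≤ ‖∏ k ∈ Finset.range K, g k‖ := by
    intro K
    rw [norm_prod]
    calc Real.exp (-(3*(8*Real.pi^2/81 + 2*S)))
        ≤ Real.exp (-(3*∑ k ∈ Finset.range K, δ k)) := by
          apply Real.exp_le_exp.2
          have := hδsum K
          linarith
      _ = ∏ k ∈ Finset.range K, Real.exp (-(3*δ k)) := by
          rw [← Real.exp_sum]
          congr 1
          rw [Finset.mul_sum, ← Finset.sum_neg_distrib]
      _ ≤ ∏ k ∈ Finset.range K, (1 - δ k) :=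
          Finset.prod_le_prod (fun k _ => (Real.exp_pos _).le)
            (fun k _ => exp_neg3 (hδ0 k) (hδ1 k))
      _ ≤ ∏ k ∈ Finset.range K, ‖g k‖ :=
          Finset.prod_le_prod (fun k _ => by linarith [hδ1 k]) (fun k _ => hlow k)
  -- multipliability
  have hmult : Multipliable g := by
    suffices hlog : Summable (fun k => Complex.log (g k)) by
      have hp := hlog.hasSum.cexp
      have hfe : (Complex.exp ∘ fun k => Complex.log (g k)) = g :=
        funext fun k => Complex.exp_log (hne k)
      rw [hfe] at hp
      exact ⟨_, hp⟩
    rw [← summable_nat_add_iff 5]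
    have hu : Summable (fun k : ℕ => (3/2:ℝ)*((4*Real.pi/3)*(1/2:ℝ)^(k+5)
        + 2*(c (n+(k+5)):ℝ)/(b (n+(k+5))))) := by
      apply Summable.mul_left
      apply Summable.add
      · have h1 : Summable (fun k : ℕ => ((4*Real.pi/3)*(1/2:ℝ)^5)*(1/2:ℝ)^k) :=
          (summable_geometric_of_lt_one (by norm_num) (by norm_num)).mul_left _
        exact h1.congr fun k => by rw [pow_add]; ring
      · have h2 : Summable (fun k : ℕ => (c (k+(n+5)):ℝ)/(b (k+(n+5)))) :=
          (summable_nat_add_iff (n+5)).2 hsum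
        have h3 := h2.mul_left 2
        refine h3.congr fun k => ?_
        rw [show k+(n+5) = n+(k+5) from by omega, mul_div_assoc]
    refine Summable.of_norm_bounded hu fun k => ?_
    have hble : (1:ℕ) ≤ b (n+(k+5)) := le_trans one_le_two (hb _)
    have hz : ‖g (k+5) - 1‖ ≤ (4*Real.pi/3)*(1/2:ℝ)^(k+5)
        + 2*(c (n+(k+5)):ℝ)/(b (n+(k+5))) := by
      have h := maskFn_sub_one (b (n+(k+5))) (B (n+(k+5))) hble (hBcard _) (ξ / P (k+5))
      rw [← hc] at h
      have habs : |ξ / P (k+5)| = |ξ| * (P (k+5))⁻¹ := by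
        rw [abs_div, abs_of_pos (hPpos _), div_eq_mul_inv]
      have hmain : 2*Real.pi*(b (n+(k+5)):ℝ)*|ξ / P (k+5)| ≤ (4*Real.pi/3)*(1/2:ℝ)^(k+5) := by
        rw [habs]
        have hbp := hbP (k+5)
        have hbp0 : (0:ℝ) ≤ (b (n+(k+5)):ℝ) / P (k+5) := by
          have := hbpos (n+(k+5)); have := hPpos (k+5); positivity
        have hmm : ((b (n+(k+5)):ℝ) / P (k+5)) * |ξ| ≤ (1/2:ℝ)^(k+5) * (2/3) :=
          mul_le_mul hbp hξabs (abs_nonneg _) (by positivity)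
        have heq : 2*Real.pi*(b (n+(k+5)):ℝ)*(|ξ| * (P (k+5))⁻¹)
            = 2*Real.pi*(((b (n+(k+5)):ℝ) / P (k+5)) * |ξ|) := by
          rw [div_eq_mul_inv]; ring
        rw [heq]
        nlinarith [hmm, hπ0]
      calc ‖g (k+5) - 1‖
          ≤ 2*Real.pi*(b (n+(k+5)):ℝ)*|ξ / P (k+5)| + 2*(c (n+(k+5)):ℝ)/(b (n+(k+5))) := h
        _ ≤ (4*Real.pi/3)*(1/2:ℝ)^(k+5) + 2*(c (n+(k+5)):ℝ)/(b (n+(k+5))) := by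
            linarith [hmain]
    have hz2 : ‖g (k+5) - 1‖ ≤ 1/2 := by
      refine hz.trans ?_
      have hp5 : ((1:ℝ)/2)^(k+5) ≤ (1/2:ℝ)^5 :=
        pow_le_pow_of_le_one (by norm_num) (by norm_num) (by omega)
      have := hcb (k+5)
      nlinarith [hπ0, hπ, mul_div_assoc (2:ℝ) ((c (n+(k+5))):ℝ) ((b (n+(k+5))):ℝ),
        mul_le_mul_of_nonneg_left hp5 (by positivity : (0:ℝ) ≤ 4*Real.pi/3)]
    calc ‖Complex.log (g (k+5))‖
        = ‖Complex.log (1 + (g (k+5) - 1))‖ := by rw [show (1:ℂ) + (g (k+5) - 1) = g (k+5) by ring]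
      _ ≤ (3/2)*‖g (k+5) - 1‖ := Complex.norm_log_one_add_half_le_self hz2
      _ ≤ (3/2)*((4*Real.pi/3)*(1/2:ℝ)^(k+5) + 2*(c (n+(k+5)):ℝ)/(b (n+(k+5)))) :=
          mul_le_mul_of_nonneg_left hz (by norm_num)
  -- conclude
  have hten : Tendsto (fun K => ‖∏ k ∈ Finset.range K, g k‖) atTop (nhds ‖∏' k, g k‖) :=
    (hmult.hasProd.tendsto_prod_nat).norm
  exact ge_of_tendsto hten (Eventually.of_forall hprod)
end
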